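/- Let X = {x ∈ Z^n_{≥0} : Σ_i x_i ≤ a} with benefits [τ(x)]_i = τ_i x_i for positive integers τ_1 ≥ ... ≥ τ_n, L = lcm(τ_1,...,τ_n), and T̄ = ⌈(1/a) Σ_{i=1}^n L/τ_i⌉ > 1. If the inefficiency bound satisfies (τ_1 - min(τ_n, τ_1/a))/τ_1 ≤ η̄ < 1, then there exist allocations x(1),...,x(T̄) ∈ X, each with ineff(x(t)) ≤ η̄, such that every stakeholder receives the same total benefit L. -/

import Mathlib

private theorem tele_anti (f : ℕ → ℕ) (hf : ∀ k, f (k + 1) ≤ f k) (N : ℕ) :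
    ∑ k ∈ Finset.range N, (f k - f (k + 1)) = f 0 - f N := by
  induction N with
  | zero => simp
  | succ N ih =>
    have h2 : f N ≤ f 0 := (antitone_nat_of_succ_le hf) (Nat.zero_le N)
    have h1 := hf N
    rw [Finset.sum_range_succ, ih]; omega

private theorem tele_mono (g : ℕ → ℕ) (hg : ∀ k, g k ≤ g (k + 1)) (N : ℕ) :
    ∑ k ∈ Finset.range N, (g (k + 1) - g k) = g N - g 0 := by
  induction N with
  | zero => simp
  | succ N ih =>
    have h2 : g 0 ≤ g N := (monotone_nat_of_le_succ hg) (Nat.zero_le N)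
    have h1 := hg N
    rw [Finset.sum_range_succ, ih]; omega

private theorem fairness_aux (n a : ℕ) (ha : 0 < a) (hn : 0 < n)
    (τ : Fin n → ℕ) (hτ : ∀ i, 0 < τ i)
    (hsorted : ∀ i j : Fin n, i ≤ j → τ j ≤ τ i)
    (L : ℕ) (hLpos : 0 < L) (hdvd : ∀ i, τ i ∣ L)
    (T : ℕ) (hT1 : ∑ i, L / τ i ≤ T * a) (hT2 : (T - 1) * a < ∑ i, L / τ i) :
    ∃ x : Fin T → Fin n → ℕ,
      (∀ t, ∑ i, x t i ≤ a) ∧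
      (∀ t, min (a * τ ⟨n - 1, Nat.sub_lt hn Nat.one_pos⟩) (τ ⟨0, hn⟩) ≤
        ∑ i, τ i * x t i) ∧
      (∀ i, τ i * ∑ t, x t i = L) := by
  classical
  set P : ℕ → ℕ := fun k => ∑ j : Fin n, if k ≤ (j : ℕ) then L / τ j else 0 with hPdef
  have hPanti : ∀ k, P (k + 1) ≤ P k := by
    intro k
    apply Finset.sum_le_sum
    intro j _
    by_cases h : k + 1 ≤ (j : ℕ)
    · rw [if_pos h, if_pos (by omega)]
    · rw [if_neg h]
      exact Nat.zero_le _
  have hPA : Antitone P := antitone_nat_of_succ_le hPanti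
  have hmpos : ∀ i : Fin n, 0 < L / τ i :=
    fun i => Nat.div_pos (Nat.le_of_dvd hLpos (hdvd i)) (hτ i)
  have hmul : ∀ i : Fin n, τ i * (L / τ i) = L := fun i => Nat.mul_div_cancel' (hdvd i)
  have hPstep : ∀ i : Fin n, P i = L / τ i + P ((i : ℕ) + 1) := by
    intro i
    have key : ∀ j : Fin n, (if (i : ℕ) ≤ (j : ℕ) then L / τ j else 0) =
        (if j = i then L / τ j else 0) + (if (i : ℕ) + 1 ≤ (j : ℕ) then L / τ j else 0) := by
      intro j
      by_cases hj : j = i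
      · subst hj; simp
      · have hne : (j : ℕ) ≠ (i : ℕ) := fun h => hj (Fin.ext h)
        rw [if_neg hj]
        by_cases h : (i : ℕ) ≤ (j : ℕ)
        · rw [if_pos h, if_pos (by omega), Nat.zero_add]
        · rw [if_neg h, if_neg (by omega)]
    show (∑ j : Fin n, if (i : ℕ) ≤ (j : ℕ) then L / τ j else 0) = _
    rw [Finset.sum_congr rfl (fun j _ => key j), Finset.sum_add_distrib,
      Finset.sum_ite_eq' Finset.univ i (fun j => L / τ j)]
    simp
    show _ = ∑ j : Fin n, (if (i : ℕ) + 1 ≤ (j : ℕ) then L / τ j else 0)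
    exact Finset.sum_congr rfl (fun j _ => if_congr (by rw [Fin.lt_def]; omega) rfl rfl)
  have hP0 : P 0 = ∑ i, L / τ i := by
    show (∑ j : Fin n, if 0 ≤ (j : ℕ) then L / τ j else 0) = _
    simp
  have hPn : P n = 0 := by
    apply Finset.sum_eq_zero
    intro j _
    have := j.isLt
    rw [if_neg]; omega
  rw [← hP0] at hT1 hT2
  refine ⟨fun t i => min (P (i : ℕ)) ((t : ℕ) * a + a) - max (P ((i : ℕ) + 1)) ((t : ℕ) * a),
    ?_, ?_, ?_⟩
  · -- feasibility:  ∑ i, x t i ≤ a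
    intro t
    have hsum : (∑ i : Fin n,
        (min (P (i : ℕ)) ((t : ℕ) * a + a) - max (P ((i : ℕ) + 1)) ((t : ℕ) * a)))
        = (min ((t : ℕ) * a + a) (max ((t : ℕ) * a) (P 0)))
          - (min ((t : ℕ) * a + a) (max ((t : ℕ) * a) (P n))) := by
      rw [Fin.sum_univ_eq_sum_range
        (fun k => min (P k) ((t : ℕ) * a + a) - max (P (k + 1)) ((t : ℕ) * a)) n]
      rw [Finset.sum_congr rfl (fun k _ => by
        have := hPanti k
        show min (P k) ((t : ℕ) * a + a) - max (P (k + 1)) ((t : ℕ) * a)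
          = min ((t : ℕ) * a + a) (max ((t : ℕ) * a) (P k))
            - min ((t : ℕ) * a + a) (max ((t : ℕ) * a) (P (k + 1)))
        omega)]
      exact tele_anti (fun s => min ((t : ℕ) * a + a) (max ((t : ℕ) * a) (P s)))
        (fun k => by have := hPanti k; omega) n
    rw [hsum]
    omega
  · -- per-period efficiency
    intro t
    have htlt := t.isLt
    rcases lt_or_eq_of_le (Nat.succ_le_of_lt htlt) with hcase | hcase
    · -- not the last period: full allocation of a units
      have hfull : (t : ℕ) * a + a ≤ P 0 := by
        have h1 : ((t : ℕ) + 1) * a ≤ (T - 1) * a :=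
          Nat.mul_le_mul_right a (by omega)
        have h2 : ((t : ℕ) + 1) * a = (t : ℕ) * a + a := by ring
        omega
      have hsum : (∑ i : Fin n,
          (min (P (i : ℕ)) ((t : ℕ) * a + a) - max (P ((i : ℕ) + 1)) ((t : ℕ) * a))) = a := by
        rw [Fin.sum_univ_eq_sum_range
          (fun k => min (P k) ((t : ℕ) * a + a) - max (P (k + 1)) ((t : ℕ) * a)) n]
        rw [Finset.sum_congr rfl (fun k _ => by
          have := hPanti k
          show min (P k) ((t : ℕ) * a + a) - max (P (k + 1)) ((t : ℕ) * a)
            = min ((t : ℕ) * a + a) (max ((t : ℕ) * a) (P k))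
              - min ((t : ℕ) * a + a) (max ((t : ℕ) * a) (P (k + 1)))
          omega)]
        rw [tele_anti (fun s => min ((t : ℕ) * a + a) (max ((t : ℕ) * a) (P s)))
          (fun k => by have := hPanti k; omega) n]
        omega
      have hτl : ∀ i : Fin n, τ ⟨n - 1, Nat.sub_lt hn Nat.one_pos⟩ ≤ τ i := by
        intro i
        apply hsorted
        rw [Fin.le_def]
        have := i.isLt
        simp only
        omega
      calc min (a * τ ⟨n - 1, Nat.sub_lt hn Nat.one_pos⟩) (τ ⟨0, hn⟩)
          ≤ a * τ ⟨n - 1, Nat.sub_lt hn Nat.one_pos⟩ := min_le_left _ _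
        _ = τ ⟨n - 1, Nat.sub_lt hn Nat.one_pos⟩ * a := Nat.mul_comm _ _
        _ = τ ⟨n - 1, Nat.sub_lt hn Nat.one_pos⟩ * ∑ i : Fin n,
              (min (P (i : ℕ)) ((t : ℕ) * a + a) - max (P ((i : ℕ) + 1)) ((t : ℕ) * a)) := by
            rw [hsum]
        _ = ∑ i : Fin n, τ ⟨n - 1, Nat.sub_lt hn Nat.one_pos⟩ *
              (min (P (i : ℕ)) ((t : ℕ) * a + a) - max (P ((i : ℕ) + 1)) ((t : ℕ) * a)) :=
            Finset.mul_sum _ _ _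
        _ ≤ ∑ i : Fin n, τ i *
              (min (P (i : ℕ)) ((t : ℕ) * a + a) - max (P ((i : ℕ) + 1)) ((t : ℕ) * a)) :=
            Finset.sum_le_sum (fun i _ => Nat.mul_le_mul_right _ (hτl i))
    · -- last period: stakeholder 0 gets at least one unit
      have ht : (t : ℕ) + 1 = T := hcase
      have e1 : T * a = (t : ℕ) * a + a := by
        have h := congrArg (· * a) ht
        rw [← h]; ring
      have e2 : (T - 1) * a = (t : ℕ) * a := by
        have hT1' : T - 1 = (t : ℕ) := by omega
        exact congrArg (· * a) hT1'
      have hstep0 := hPstep ⟨0, hn⟩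
      have hm0 := hmpos ⟨0, hn⟩
      have hx0 : 1 ≤ min (P ((⟨0, hn⟩ : Fin n) : ℕ)) ((t : ℕ) * a + a)
          - max (P (((⟨0, hn⟩ : Fin n) : ℕ) + 1)) ((t : ℕ) * a) := by
        simp only [Fin.val_mk] at hstep0 ⊢
        omega
      calc min (a * τ ⟨n - 1, Nat.sub_lt hn Nat.one_pos⟩) (τ ⟨0, hn⟩)
          ≤ τ ⟨0, hn⟩ := min_le_right _ _
        _ ≤ τ ⟨0, hn⟩ * (min (P ((⟨0, hn⟩ : Fin n) : ℕ)) ((t : ℕ) * a + a)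
              - max (P (((⟨0, hn⟩ : Fin n) : ℕ) + 1)) ((t : ℕ) * a)) :=
            Nat.le_mul_of_pos_right _ (by omega)
        _ ≤ ∑ i : Fin n, τ i *
              (min (P (i : ℕ)) ((t : ℕ) * a + a) - max (P ((i : ℕ) + 1)) ((t : ℕ) * a)) :=
            Finset.single_le_sum (f := fun i => τ i *
              (min (P (i : ℕ)) ((t : ℕ) * a + a) - max (P ((i : ℕ) + 1)) ((t : ℕ) * a)))
              (fun i _ => Nat.zero_le _) (Finset.mem_univ _)
  · -- fairness: total benefit L for every stakeholder
    intro i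
    have hstep := hPstep i
    have hsum : (∑ t : Fin T,
        (min (P (i : ℕ)) ((t : ℕ) * a + a) - max (P ((i : ℕ) + 1)) ((t : ℕ) * a)))
        = L / τ i := by
      rw [Fin.sum_univ_eq_sum_range
        (fun s => min (P (i : ℕ)) (s * a + a) - max (P ((i : ℕ) + 1)) (s * a)) T]
      rw [Finset.sum_congr rfl (fun s _ => by
        have hb := hPanti (i : ℕ)
        have h2 : (s + 1) * a = s * a + a := by ring
        show min (P (i : ℕ)) (s * a + a) - max (P ((i : ℕ) + 1)) (s * a)
          = min (P (i : ℕ)) (max (P ((i : ℕ) + 1)) ((s + 1) * a))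
            - min (P (i : ℕ)) (max (P ((i : ℕ) + 1)) (s * a))
        omega)]
      rw [tele_mono (fun s => min (P (i : ℕ)) (max (P ((i : ℕ) + 1)) (s * a)))
        (fun s => by
          have h1 : s * a ≤ (s + 1) * a := Nat.mul_le_mul_right a (Nat.le_succ s)
          omega) T]
      have hiP : P (i : ℕ) ≤ T * a := le_trans (hPA (Nat.zero_le _)) hT1
      have hb := hPanti (i : ℕ)
      have h0 : 0 * a = 0 := by ring
      omega
    rw [hsum]
    exact hmul i

/-- Perfect fairness (common total benefit `L`) is achievable in
`T̄ = ⌈(1/a) ∑ L/τ_i⌉` periods when the inefficiency bound satisfies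
`(τ_1 - min(τ_n, τ_1/a))/τ_1 ≤ η̄ < 1`. -/
theorem simplicial_fairness_achievable (n a : ℕ) (ha : 0 < a) (hn : 0 < n)
    (τ : Fin n → ℕ) (hτ : ∀ i, 0 < τ i)
    (hsorted : ∀ i j : Fin n, i ≤ j → τ j ≤ τ i)
    (ηbar : ℝ)
    (hη1 : ((τ ⟨0, hn⟩ : ℝ) - min ((τ ⟨n - 1, Nat.sub_lt hn Nat.one_pos⟩ : ℝ))
        ((τ ⟨0, hn⟩ : ℝ) / a)) / (τ ⟨0, hn⟩ : ℝ) ≤ ηbar)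
    (hη2 : ηbar < 1)
    (hTbar : 1 < ⌈(∑ i, ((Finset.univ.lcm τ / τ i : ℕ) : ℚ)) / (a : ℚ)⌉₊) :
    ∃ x : Fin (⌈(∑ i, ((Finset.univ.lcm τ / τ i : ℕ) : ℚ)) / (a : ℚ)⌉₊) → Fin n → ℕ,
      (∀ t, ∑ i, x t i ≤ a) ∧
      (∀ t, ((a : ℝ) * (τ ⟨0, hn⟩ : ℝ) - ∑ i, (τ i : ℝ) * (x t i : ℝ)) /
          ((a : ℝ) * (τ ⟨0, hn⟩ : ℝ)) ≤ ηbar) ∧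
      (∀ i, τ i * ∑ t, x t i = Finset.univ.lcm τ) := by
  classical
  set L := Finset.univ.lcm τ with hLdef
  set T := ⌈(∑ i, ((L / τ i : ℕ) : ℚ)) / (a : ℚ)⌉₊ with hTdef
  have hLpos : 0 < L := by
    rw [hLdef]
    rcases Nat.eq_zero_or_pos (Finset.univ.lcm τ) with h0 | h0
    · exfalso
      rw [Finset.lcm_eq_zero_iff] at h0
      obtain ⟨i, _, hi⟩ := h0
      exact absurd hi (Nat.pos_iff_ne_zero.mp (hτ i))
    · exact h0
  have hdvd : ∀ i, τ i ∣ L := fun i => Finset.dvd_lcm (Finset.mem_univ i)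
  have haQ : (0 : ℚ) < a := by exact_mod_cast ha
  have hMcast : (∑ i, ((L / τ i : ℕ) : ℚ)) = ((∑ i, L / τ i : ℕ) : ℚ) := by push_cast; ring
  have hT1 : ∑ i, L / τ i ≤ T * a := by
    have h1 : (∑ i, ((L / τ i : ℕ) : ℚ)) / (a : ℚ) ≤ (T : ℚ) := Nat.le_ceil _
    rw [div_le_iff₀ haQ, hMcast] at h1
    exact_mod_cast h1
  have hT2 : (T - 1) * a < ∑ i, L / τ i := by
    by_contra hcon
    push_neg at hcon
    have h1 : (∑ i, ((L / τ i : ℕ) : ℚ)) / (a : ℚ) ≤ ((T - 1 : ℕ) : ℚ) := by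
      rw [div_le_iff₀ haQ, hMcast]
      exact_mod_cast hcon
    have h2 : T ≤ T - 1 := Nat.ceil_le.mpr h1
    omega
  obtain ⟨x, hfeas, heff, hfair⟩ := fairness_aux n a ha hn τ hτ hsorted L hLpos hdvd T hT1 hT2
  refine ⟨x, hfeas, ?_, hfair⟩
  intro t
  have hτ0 : (0 : ℝ) < (τ ⟨0, hn⟩ : ℝ) := by exact_mod_cast hτ _
  have ha' : (0 : ℝ) < (a : ℝ) := by exact_mod_cast ha
  rw [div_le_iff₀ (by positivity)]
  rw [div_le_iff₀ hτ0] at hη1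
  have hkey : ((min (a * τ ⟨n - 1, Nat.sub_lt hn Nat.one_pos⟩) (τ ⟨0, hn⟩) : ℕ) : ℝ)
      ≤ ((∑ i, τ i * x t i : ℕ) : ℝ) := Nat.cast_le.mpr (heff t)
  push_cast [Nat.cast_min] at hkey
  have h6 : (a : ℝ) * ((τ ⟨0, hn⟩ : ℝ) - min ((τ ⟨n - 1, Nat.sub_lt hn Nat.one_pos⟩ : ℝ))
      ((τ ⟨0, hn⟩ : ℝ) / a)) ≤ (a : ℝ) * (ηbar * (τ ⟨0, hn⟩ : ℝ)) :=
    mul_le_mul_of_nonneg_left hη1 ha'.le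
  have hmin : (a : ℝ) * min ((τ ⟨n - 1, Nat.sub_lt hn Nat.one_pos⟩ : ℝ))
      ((τ ⟨0, hn⟩ : ℝ) / a) = min ((a : ℝ) * (τ ⟨n - 1, Nat.sub_lt hn Nat.one_pos⟩ : ℝ))
      ((τ ⟨0, hn⟩ : ℝ)) := by
    rw [mul_min_of_nonneg _ _ ha'.le, mul_div_cancel₀ _ (ne_of_gt ha')]
  rw [mul_sub, hmin] at h6
  have h7 : (a : ℝ) * (ηbar * (τ ⟨0, hn⟩ : ℝ)) = ηbar * ((a : ℝ) * (τ ⟨0, hn⟩ : ℝ)) := by ring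
  linarith
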